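/- Define $R(\omega) = \frac{2 + \sqrt{2}\cos(3\pi/4 + \omega) - \Lambda(\omega)}{\sqrt{2}(1 - \cos\omega)}$ where $\Lambda(\omega) = 2 - \cos\omega + \sqrt{(3-\cos\omega)(1-\cos\omega)}$. Then $R(\omega) = -\frac{2\sqrt{2}}{\omega} + O(\omega)$ as $\omega \to 0^+$; in particular $|R(\omega)| \to \infty$ and there are constants $c, \omega_0 > 0$ such that $|R(\omega)| \ge c/\omega$ for $0 < \omega < \omega_0$. -/

import Mathlib

set_option maxHeartbeats 1000000

open Real Filter

/-- The lattice vertical translation eigenvalue as a function of the frequency. -/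
noncomputable def latticeEigenvalue (ω : ℝ) : ℝ :=
  2 - Real.cos ω + Real.sqrt ((3 - Real.cos ω) * (1 - Real.cos ω))

/-- The coefficient ratio `R(ω)` relating the two opposite-frequency Fourier
modes of a lattice vertical translation eigenfunction. -/
noncomputable def coeffRatio (ω : ℝ) : ℝ :=
  (2 + Real.sqrt 2 * Real.cos (3*Real.pi/4 + ω) - latticeEigenvalue ω)
    / (Real.sqrt 2 * (1 - Real.cos ω))

lemma coeffRatio_eq (ω : ℝ) :
    coeffRatio ω = -(Real.sin ω + Real.sqrt ((3 - Real.cos ω) * (1 - Real.cos ω)))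
      / (Real.sqrt 2 * (1 - Real.cos ω)) := by
  have h34 : (3*Real.pi/4 : ℝ) = Real.pi - Real.pi/4 := by ring
  have hcos : Real.cos (3*Real.pi/4 + ω) = -(Real.sqrt 2 / 2) * (Real.cos ω + Real.sin ω) := by
    rw [Real.cos_add, h34, Real.cos_pi_sub, Real.sin_pi_sub, Real.cos_pi_div_four,
      Real.sin_pi_div_four]
    ring
  have h2 : Real.sqrt 2 * Real.sqrt 2 = 2 := Real.mul_self_sqrt (by norm_num)
  unfold coeffRatio latticeEigenvalue
  rw [hcos]
  congr 1
  linear_combination (-(Real.cos ω + Real.sin ω)/2) * h2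

lemma sqrt2_sq : Real.sqrt 2 * Real.sqrt 2 = 2 := Real.mul_self_sqrt (by norm_num)

lemma one_le_sqrt2 : (1:ℝ) ≤ Real.sqrt 2 := by
  nlinarith [sqrt2_sq, Real.sqrt_nonneg 2]

lemma abstract_bound (ω c s r : ℝ) (h0 : 0 < ω) (h1 : ω < 1/2)
    (hcb : |c - (1 - ω^2/2)| ≤ ω^4 * (5/96))
    (hsb : |s - (ω - ω^3/6)| ≤ ω^4 * (5/96))
    (hcle : c ≤ 1)
    (hr2 : r^2 = (3 - c) * (1 - c)) (hrnn : 0 ≤ r)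
    (hpy : s^2 + c^2 = 1) :
    |(-(s + r)) / (Real.sqrt 2 * (1 - c)) + 2 * Real.sqrt 2 / ω| ≤ 5 * ω := by
  obtain ⟨u, hu⟩ : ∃ u : ℝ, u = 1 - c := ⟨_, rfl⟩
  rw [show (1 - c) = u from hu.symm]
  have hω2 : ω^2 ≤ 1 := by nlinarith
  have hω4 : ω^4 ≤ ω^2 := by nlinarith [sq_nonneg ω]
  have hc1 := (abs_le.mp hcb).1
  have hc2 := (abs_le.mp hcb).2
  have hs1 := (abs_le.mp hsb).1
  have hs2 := (abs_le.mp hsb).2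
  have hu_lb : (43:ℝ)/96 * ω^2 ≤ u := by rw [hu]; nlinarith
  have hu_ub : u ≤ (53:ℝ)/96 * ω^2 := by rw [hu]; nlinarith
  have hupos : 0 < u := lt_of_lt_of_le (by positivity) hu_lb
  have hs_lb : (3:ℝ)/4 * ω ≤ s := by nlinarith
  have hspos : 0 < s := lt_of_lt_of_le (by positivity) hs_lb
  have hAs : r^2 = s^2 + 2*u^2 := by rw [hu]; nlinarith
  have hdpos : 0 < r + s := by linarith
  have hrs : r - s = 2*u^2 / (r + s) := by
    rw [eq_div_iff hdpos.ne']
    linear_combination hAs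
  have hsqrt2pos : (0:ℝ) < Real.sqrt 2 := by positivity
  have hkey : (-(s + r)) / (Real.sqrt 2 * u) + 2 * Real.sqrt 2 / ω
      = (4*u - ω*s - ω*r) / (Real.sqrt 2 * u * ω) := by
    field_simp
    linear_combination (2*u) * sqrt2_sq
  rw [hkey, abs_div]
  have hdenpos : 0 < Real.sqrt 2 * u * ω := by positivity
  rw [abs_of_pos hdenpos]
  have hT : 4*u - ω*s - ω*r = (4*u - 2*ω*s) - ω*(2*u^2/(r+s)) := by
    linear_combination (-ω) * hrs
  have hb1 : |4*u - 2*ω*s| ≤ (31:ℝ)/48 * ω^4 := by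
    rw [abs_le]
    constructor <;> rw [hu] <;> nlinarith
  have hb2 : ω*(2*u^2/(r+s)) ≤ (61:ℝ)/48 * ω^4 := by
    have h1 : 2*u^2/(r+s) ≤ 2*u^2/s :=
      div_le_div_of_nonneg_left (by positivity) hspos (by linarith)
    have h2 : 2*u^2/s ≤ 2*((53:ℝ)/96 * ω^2)^2 / ((3:ℝ)/4 * ω) := by
      apply div_le_div₀ (by positivity) _ (by positivity) hs_lb
      nlinarith [hupos.le, hu_ub]
    have h3 : 2*((53:ℝ)/96 * ω^2)^2 / ((3:ℝ)/4 * ω) = (2809:ℝ)/3456 * ω^3 := by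
      field_simp; ring
    have h4 : (2809:ℝ)/3456 * ω^3 ≤ (61:ℝ)/48 * ω^4 → True := fun _ => trivial
    have h5 : 2*u^2/(r+s) ≤ (2809:ℝ)/3456 * ω^3 := by linarith [h1, h2, h3.le, h3.ge]
    nlinarith [h5, sq_nonneg ω]
  have hb2' : 0 ≤ ω*(2*u^2/(r+s)) := by positivity
  have hnum : |4*u - ω*s - ω*r| ≤ 2 * ω^4 := by
    rw [hT]
    have := abs_sub_le (4*u - 2*ω*s) 0 (ω*(2*u^2/(r+s)))
    simp only [sub_zero, zero_sub, abs_neg] at this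
    have h6 : |ω*(2*u^2/(r+s))| = ω*(2*u^2/(r+s)) := abs_of_nonneg hb2'
    linarith [this, hb1, hb2, h6.le, h6.ge]
  have hdlb : (43:ℝ)/96 * ω^3 ≤ Real.sqrt 2 * u * ω := by
    have step1 : (43:ℝ)/96 * ω^2 * ω ≤ u * ω := mul_le_mul_of_nonneg_right hu_lb h0.le
    have step2 : u * ω ≤ Real.sqrt 2 * (u * ω) := le_mul_of_one_le_left (by positivity) one_le_sqrt2
    calc (43:ℝ)/96 * ω^3 = (43:ℝ)/96 * ω^2 * ω := by ring
      _ ≤ u * ω := step1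
      _ ≤ Real.sqrt 2 * (u * ω) := step2
      _ = Real.sqrt 2 * u * ω := by ring
  calc |4*u - ω*s - ω*r| / (Real.sqrt 2 * u * ω)
      ≤ 2 * ω^4 / ((43:ℝ)/96 * ω^3) := div_le_div₀ (by positivity) hnum (by positivity) hdlb
    _ = (192:ℝ)/43 * ω := by field_simp; ring
    _ ≤ 5 * ω := by nlinarith

lemma key_bound (ω : ℝ) (h0 : 0 < ω) (h1 : ω < 1/2) :
    |coeffRatio ω + 2 * Real.sqrt 2 / ω| ≤ 5 * ω := by
  rw [coeffRatio_eq]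
  have habs : |ω| ≤ 1 := by rw [abs_of_pos h0]; linarith
  have hcb := Real.cos_bound habs
  have hsb := Real.sin_bound habs
  rw [abs_of_pos h0] at hcb hsb
  have hAnn : 0 ≤ (3 - Real.cos ω) * (1 - Real.cos ω) := by
    have h := Real.cos_le_one ω
    have h' := Real.neg_one_le_cos ω
    nlinarith
  exact abstract_bound ω (Real.cos ω) (Real.sin ω)
    (Real.sqrt ((3 - Real.cos ω) * (1 - Real.cos ω))) h0 h1 hcb (le_trans hsb (by nlinarith [mul_pos (pow_pos h0 4) (by linarith : (0:ℝ) < 1/2 - ω)])) (Real.cos_le_one ω)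
    (Real.sq_sqrt hAnn) (Real.sqrt_nonneg _) (Real.sin_sq_add_cos_sq ω)

lemma lower_bound (ω : ℝ) (h0 : 0 < ω) (h1 : ω < 1/2) :
    Real.sqrt 2 / ω ≤ |coeffRatio ω| := by
  have hk := key_bound ω h0 h1
  have h2 : |2 * Real.sqrt 2 / ω| = 2 * Real.sqrt 2 / ω := by
    rw [abs_of_pos]; positivity
  have htri : |2 * Real.sqrt 2 / ω| - |coeffRatio ω| ≤ |coeffRatio ω + 2 * Real.sqrt 2 / ω| := by
    have h := abs_sub_abs_le_abs_sub (2 * Real.sqrt 2 / ω) (-(coeffRatio ω))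
    rw [abs_neg, sub_neg_eq_add, add_comm] at h
    exact h
  rw [h2] at htri
  have hs2lb : (5:ℝ)/4 ≤ Real.sqrt 2 := by
    nlinarith [sqrt2_sq, Real.sqrt_nonneg 2]
  have h5ω : 5 * ω ≤ Real.sqrt 2 / ω := by
    rw [le_div_iff₀ h0]
    nlinarith
  have : 2 * Real.sqrt 2 / ω - |coeffRatio ω| ≤ 5 * ω := le_trans htri hk
  have hdiv : 2 * Real.sqrt 2 / ω = Real.sqrt 2 / ω + Real.sqrt 2 / ω := by ring
  linarith

/-- `R(ω) = -2√2/ω + O(ω)` as `ω → 0⁺`; in particular `|R(ω)| → ∞` and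
`|R(ω)| ≥ c/ω` for small `ω > 0`. -/
theorem coeffRatio_asymptotics :
    (∃ C > 0, ∃ ω₁ > 0, ∀ ω : ℝ, 0 < ω → ω < ω₁ →
      |coeffRatio ω + 2 * Real.sqrt 2 / ω| ≤ C * ω) ∧
    (∃ c > 0, ∃ ω₀ > 0, ∀ ω : ℝ, 0 < ω → ω < ω₀ → c / ω ≤ |coeffRatio ω|) ∧
    Tendsto (fun ω => |coeffRatio ω|) (nhdsWithin 0 (Set.Ioi 0)) atTop := by
  refine ⟨⟨5, by norm_num, 1/2, by norm_num, fun ω h0 h1 => key_bound ω h0 h1⟩,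
    ⟨Real.sqrt 2, by positivity, 1/2, by norm_num, fun ω h0 h1 => lower_bound ω h0 h1⟩, ?_⟩
  have hten : Tendsto (fun ω : ℝ => Real.sqrt 2 / ω) (nhdsWithin 0 (Set.Ioi 0)) atTop := by
    simp only [div_eq_mul_inv]
    exact Tendsto.const_mul_atTop (by positivity) tendsto_inv_nhdsGT_zero
  apply tendsto_atTop_mono' _ _ hten
  filter_upwards [Ioo_mem_nhdsGT_of_mem (Set.mem_Ico.mpr ⟨le_refl (0:ℝ), (by norm_num : (0:ℝ) < 1/2)⟩)]
    with ω hω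
  exact lower_bound ω hω.1 hω.2
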